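/- For every n ≥ 1, if the graph T_{n+1} is SPN, then the complete bipartite graph K_{2,n} is SPN. -/

import Mathlib

open Matrix Real

/-- A real matrix `A` is copositive if `xᵀ A x ≥ 0` for every entrywise nonnegative `x`. -/
def IsCopositive {m : Type*} [Fintype m] (A : Matrix m m ℝ) : Prop :=
  ∀ x : m → ℝ, (∀ i, 0 ≤ x i) → 0 ≤ x ⬝ᵥ A.mulVec x

/-- A real matrix is SPN if it is the sum of a positive semidefinite matrix and a
symmetric entrywise nonnegative matrix. -/
def IsSPN {m : Type*} [Fintype m] (A : Matrix m m ℝ) : Prop :=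
  ∃ P N : Matrix m m ℝ, P.PosSemidef ∧ N.IsSymm ∧ (∀ i j, 0 ≤ N i j) ∧ A = P + N

/-- `G` is the graph of the matrix `A`: distinct `i`, `j` are adjacent iff `A i j ≠ 0`. -/
def IsGraphOf {m : Type*} [Fintype m] (A : Matrix m m ℝ) (G : SimpleGraph m) : Prop :=
  ∀ i j, G.Adj i j ↔ i ≠ j ∧ A i j ≠ 0

/-- A simple graph `G` is SPN if every symmetric copositive matrix whose graph is `G` is SPN. -/
def SPNGraph {m : Type*} [Fintype m] (G : SimpleGraph m) : Prop :=
  ∀ A : Matrix m m ℝ, A.IsSymm → IsCopositive A → IsGraphOf A G → IsSPN A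

/-- The graph `T_m` on vertices `{0, …, m-1}`: two distinct vertices are adjacent iff at
least one of them lies in `{m-2, m-1}` (i.e. `m-2` triangles sharing the base `{m-2, m-1}`). -/
def Tgraph (m : ℕ) : SimpleGraph (Fin m) where
  Adj i j := i ≠ j ∧ (m - 2 ≤ i.val ∨ m - 2 ≤ j.val)
  symm := ⟨fun i j h => ⟨h.1.symm, h.2.symm⟩⟩
  loopless := ⟨fun i h => h.1 rfl⟩

/-- If the graph `T_{n+1}` is SPN, then the complete bipartite graph `K_{2,n}` is SPN. -/
-- -- quadratic form on two singles
lemma quad2 {m : Type*} [Fintype m] [DecidableEq m] (A : Matrix m m ℝ) (i j : m) (c d : ℝ) :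
    (Pi.single i c + Pi.single j d) ⬝ᵥ A *ᵥ (Pi.single i c + Pi.single j d)
      = c * A i i * c + c * A i j * d + d * A j i * c + d * A j j * d := by
  simp only [dotProduct, Matrix.mulVec, Pi.add_apply, Pi.single_apply, dotProduct,
    add_mul, mul_add, ite_mul, mul_ite, zero_mul, mul_zero, Finset.sum_add_distrib,
    Finset.sum_ite_eq, Finset.sum_ite_eq', Finset.mem_univ, if_true]
  ring



lemma single_nonneg' {m : Type*} [DecidableEq m] {i j : m} {c d : ℝ} (hc : 0 ≤ c) (hd : 0 ≤ d)
    (k : m) : 0 ≤ ((Pi.single i c : m → ℝ) + (Pi.single j d : m → ℝ)) k := by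
  have : ∀ (a : m) (e : ℝ), 0 ≤ e → 0 ≤ (Pi.single a e : m → ℝ) k := by
    intro a e he
    rcases eq_or_ne k a with rfl | hk
    · simpa using he
    · simp [Pi.single_apply, hk]
  exact add_nonneg (this i c hc) (this j d hd)

lemma copos_diag {m : Type*} [Fintype m] [DecidableEq m] {A : Matrix m m ℝ}
    (h : IsCopositive A) (i : m) : 0 ≤ A i i := by
  have h1 := h (Pi.single i 1 + Pi.single i 0) (single_nonneg' zero_le_one le_rfl)
  rw [quad2] at h1
  nlinarith [h1]

lemma copos_offdiag {m : Type*} [Fintype m] [DecidableEq m] {A : Matrix m m ℝ}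
    (h : IsCopositive A) {i : m} (hii : A i i = 0) (j : m) : 0 ≤ A i j + A j i := by
  by_contra hneg
  push_neg at hneg
  set s := A i j + A j i with hs
  have hjj : 0 ≤ A j j := copos_diag h j
  have hns : 0 < -s := by linarith
  have hc : 0 ≤ (A j j + 1) / (-s) := div_nonneg (by linarith) (by linarith)
  have h1 := h (Pi.single i ((A j j + 1) / (-s)) + Pi.single j 1) (single_nonneg' hc zero_le_one)
  rw [quad2, hii] at h1
  have hcs : (A j j + 1) / (-s) * s = -(A j j + 1) := by
    rw [div_neg, neg_mul, div_mul_cancel₀ _ hneg.ne]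
  rw [hs] at hcs
  nlinarith [h1, hcs]

lemma master {k : ℕ} (M : Matrix (Fin 2 ⊕ Fin k) (Fin 2 ⊕ Fin k) ℝ)
    (hsu : ∀ i, M (Sum.inr i) (Sum.inl 0) = M (Sum.inl 0) (Sum.inr i))
    (hsv : ∀ i, M (Sum.inr i) (Sum.inl 1) = M (Sum.inl 1) (Sum.inr i))
    (h0 : M (Sum.inl 0) (Sum.inl 1) = 0)
    (h0' : M (Sum.inl 1) (Sum.inl 0) = 0)
    (hll : ∀ i j, i ≠ j → M (Sum.inr i) (Sum.inr j) = 0)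
    (x : Fin 2 ⊕ Fin k → ℝ) :
    x ⬝ᵥ M *ᵥ x = M (Sum.inl 0) (Sum.inl 0) * x (Sum.inl 0)^2
      + M (Sum.inl 1) (Sum.inl 1) * x (Sum.inl 1)^2
      + ∑ i, (M (Sum.inr i) (Sum.inr i) * x (Sum.inr i)^2
        + 2 * M (Sum.inl 0) (Sum.inr i) * x (Sum.inl 0) * x (Sum.inr i)
        + 2 * M (Sum.inl 1) (Sum.inr i) * x (Sum.inl 1) * x (Sum.inr i)) := by
  have h1 : ∀ i, ∑ j, M (Sum.inr i) (Sum.inr j) * x (Sum.inr j)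
      = M (Sum.inr i) (Sum.inr i) * x (Sum.inr i) := by
    intro i
    exact Finset.sum_eq_single i
      (fun j _ hj => by rw [hll i j (Ne.symm hj), zero_mul])
      (fun h => absurd (Finset.mem_univ i) h)
  simp only [dotProduct, Matrix.mulVec, Fintype.sum_sum_type, Fin.sum_univ_two, dotProduct]
  simp only [h1, hsu, hsv, h0, h0', zero_mul, mul_zero, add_zero, zero_add]
  have key : (∑ i, x (Sum.inl 0) * (M (Sum.inl 0) (Sum.inr i) * x (Sum.inr i)))
      + (∑ i, x (Sum.inl 1) * (M (Sum.inl 1) (Sum.inr i) * x (Sum.inr i)))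
      + (∑ i, (x (Sum.inr i) * M (Sum.inl 0) (Sum.inr i) * x (Sum.inl 0)
          + x (Sum.inr i) * M (Sum.inl 1) (Sum.inr i) * x (Sum.inl 1)
          + x (Sum.inr i) * M (Sum.inr i) (Sum.inr i) * x (Sum.inr i)))
      = ∑ i, (M (Sum.inr i) (Sum.inr i) * x (Sum.inr i)^2
        + 2 * M (Sum.inl 0) (Sum.inr i) * x (Sum.inl 0) * x (Sum.inr i)
        + 2 * M (Sum.inl 1) (Sum.inr i) * x (Sum.inl 1) * x (Sum.inr i)) := by
    rw [← Finset.sum_add_distrib, ← Finset.sum_add_distrib]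
    exact Finset.sum_congr rfl (fun i _ => by ring)
  simp only [mul_add, Finset.mul_sum]
  linear_combination (norm := ring_nf) key

lemma leaf_lower (d a b xu xv xi : ℝ) (hd : 0 ≤ d) (h0a : d = 0 → 0 ≤ a) (h0b : d = 0 → 0 ≤ b)
    (hnot : ¬(a < 0 ∧ b < 0)) :
    -((min a 0)^2 / d * xu^2 + (min b 0)^2 / d * xv^2)
      ≤ d * xi^2 + 2*a*xu*xi + 2*b*xv*xi - (0 * xi^2 + 2 * max a 0 * xu * xi + 2 * max b 0 * xv * xi) := by
  rcases lt_or_ge a 0 with ha | ha <;> rcases lt_or_ge b 0 with hb | hb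
  · exact absurd ⟨ha, hb⟩ hnot
  · have hd0 : 0 < d := hd.lt_of_ne (fun h => absurd (h0a h.symm) (not_le.2 ha))
    rw [min_eq_left ha.le, min_eq_right hb, max_eq_right ha.le, max_eq_left hb]
    have h1 : a^2/d*d = a^2 := div_mul_cancel₀ _ hd0.ne'
    have h2 : (0:ℝ)^2/d = 0 := by simp
    rw [h2]
    nlinarith [sq_nonneg (d*xi + a*xu), hd0, h1, sq_nonneg xu,
      mul_pos hd0 hd0, div_nonneg (sq_nonneg a) hd]
  · have hd0 : 0 < d := hd.lt_of_ne (fun h => absurd (h0b h.symm) (not_le.2 hb))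
    rw [min_eq_right ha, min_eq_left hb.le, max_eq_left ha, max_eq_right hb.le]
    have h1 : b^2/d*d = b^2 := div_mul_cancel₀ _ hd0.ne'
    have h2 : (0:ℝ)^2/d = 0 := by simp
    rw [h2]
    nlinarith [sq_nonneg (d*xi + b*xv), hd0, h1, sq_nonneg xv,
      mul_pos hd0 hd0, div_nonneg (sq_nonneg b) hd]
  · rw [min_eq_right ha, min_eq_right hb, max_eq_left ha, max_eq_left hb]
    have h2 : (0:ℝ)^2/d = 0 := by simp
    rw [h2]
    nlinarith [mul_nonneg hd (sq_nonneg xi)]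

lemma leaf_value (d a : ℝ) (hd : 0 ≤ d) (h0a : d = 0 → 0 ≤ a) :
    d * (-(min a 0)/d)^2 + 2*a*1*(-(min a 0)/d) = -((min a 0)^2/d) := by
  rcases lt_or_ge a 0 with ha | ha
  · have hd0 : 0 < d := hd.lt_of_ne (fun h => absurd (h0a h.symm) (not_le.2 ha))
    rw [min_eq_left ha.le]
    field_simp
    ring
  · rw [min_eq_right ha]
    simp


lemma vecMulVec_quad {b : Type*} [Fintype b] (p x : b → ℝ) :
    x ⬝ᵥ (Matrix.vecMulVec p p) *ᵥ x = (p ⬝ᵥ x)^2 := by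
  simp only [dotProduct, Matrix.mulVec, Matrix.vecMulVec_apply, dotProduct]
  rw [pow_two, Finset.sum_mul_sum]
  simp only [Finset.mul_sum]
  rw [← Finset.sum_product', ← Finset.sum_product']
  refine Finset.sum_congr rfl (fun i _ => by ring)

lemma conj_quad {a b : Type*} [Fintype a] [Fintype b]
    (M : Matrix b b ℝ) (Q : Matrix a b ℝ) (y : a → ℝ) :
    y ⬝ᵥ (Q * M * Qᵀ) *ᵥ y = (Qᵀ *ᵥ y) ⬝ᵥ M *ᵥ (Qᵀ *ᵥ y) := by
  have h : y ᵥ* Q = Qᵀ *ᵥ y := by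
    rw [← Matrix.vecMul_transpose, Matrix.transpose_transpose]
  rw [← Matrix.mulVec_mulVec, ← Matrix.mulVec_mulVec, dotProduct_mulVec, h]

theorem K2n_SPN_of_T_SPN (n : ℕ) (hn : 1 ≤ n) (hT : SPNGraph (Tgraph (n + 1))) :
    SPNGraph (completeBipartiteGraph (Fin 2) (Fin n)) := by
  obtain ⟨m, rfl⟩ : ∃ m, n = m + 1 := ⟨n - 1, by omega⟩
  intro A hsym hcop hgraph
  have hsym' : ∀ α β, A β α = A α β := hsym.apply
  have huv : A (Sum.inl 0) (Sum.inl 1) = 0 := by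
    by_contra hA
    exact absurd ((hgraph (Sum.inl 0) (Sum.inl 1)).mpr ⟨by simp, hA⟩)
      (by simp [completeBipartiteGraph])
  have hvu : A (Sum.inl 1) (Sum.inl 0) = 0 := by rw [hsym', huv]
  have hll : ∀ i j, i ≠ j → A (Sum.inr i) (Sum.inr j) = 0 := by
    intro i j hij
    by_contra hA
    exact absurd ((hgraph (Sum.inr i) (Sum.inr j)).mpr ⟨by simp [hij], hA⟩)
      (by simp [completeBipartiteGraph])
  have ha : ∀ i, A (Sum.inl 0) (Sum.inr i) ≠ 0 := by
    intro i
    exact ((hgraph (Sum.inl 0) (Sum.inr i)).mp (by simp [completeBipartiteGraph])).2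
  have hb : ∀ i, A (Sum.inl 1) (Sum.inr i) ≠ 0 := by
    intro i
    exact ((hgraph (Sum.inl 1) (Sum.inr i)).mp (by simp [completeBipartiteGraph])).2
  have hsu : ∀ i, A (Sum.inr i) (Sum.inl 0) = A (Sum.inl 0) (Sum.inr i) := fun i => hsym' _ _
  have hsv : ∀ i, A (Sum.inr i) (Sum.inl 1) = A (Sum.inl 1) (Sum.inr i) := fun i => hsym' _ _
  have hdiag : ∀ α, 0 ≤ A α α := copos_diag hcop
  have h0a : ∀ i, A (Sum.inr i) (Sum.inr i) = 0 → 0 ≤ A (Sum.inl 0) (Sum.inr i) := by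
    intro i h
    have := copos_offdiag hcop h (Sum.inl 0)
    rw [hsu] at this
    linarith
  have h0b : ∀ i, A (Sum.inr i) (Sum.inr i) = 0 → 0 ≤ A (Sum.inl 1) (Sum.inr i) := by
    intro i h
    have := copos_offdiag hcop h (Sum.inl 1)
    rw [hsv] at this
    linarith
  by_cases hneg : ∃ w, A (Sum.inl 0) (Sum.inr w) < 0 ∧ A (Sum.inl 1) (Sum.inr w) < 0
  · -- Case 1 : some leaf has both entries negative; reduce to T_{n+1}
    obtain ⟨w, haw, hbw⟩ := hneg
    have hdw : 0 < A (Sum.inr w) (Sum.inr w) := by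
      rcases (hdiag (Sum.inr w)).lt_or_eq with h | h
      · exact h
      · exact absurd (h0a w h.symm) (not_le.2 haw)
    set sd := Real.sqrt (A (Sum.inr w) (Sum.inr w)) with hsddef
    have hsd : 0 < sd := Real.sqrt_pos.2 hdw
    have hsd2 : sd * sd = A (Sum.inr w) (Sum.inr w) := Real.mul_self_sqrt hdw.le
    set p : (Fin 2 ⊕ Fin (m+1)) → ℝ := Sum.elim
      ![A (Sum.inl 0) (Sum.inr w) / sd, A (Sum.inl 1) (Sum.inr w) / sd]
      (fun i => if i = w then sd else 0) with hpdef
    have hp0 : p (Sum.inl 0) = A (Sum.inl 0) (Sum.inr w) / sd := by simp [hpdef]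
    have hp1 : p (Sum.inl 1) = A (Sum.inl 1) (Sum.inr w) / sd := by simp [hpdef]
    have hpw : p (Sum.inr w) = sd := by simp [hpdef]
    have hpi : ∀ i, i ≠ w → p (Sum.inr i) = 0 := fun i hi => by simp [hpdef, hi]
    set A' : Matrix (Fin 2 ⊕ Fin (m+1)) (Fin 2 ⊕ Fin (m+1)) ℝ
      := A - Matrix.vecMulVec p p with hA'def
    have hA'app : ∀ α β, A' α β = A α β - p α * p β := fun α β => by
      rw [hA'def, Matrix.sub_apply, Matrix.vecMulVec_apply]
    have hrow : ∀ β, A' (Sum.inr w) β = 0 := by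
      intro β
      rw [hA'app, hpw]
      rcases β with y | j
      · fin_cases y
        · show A (Sum.inr w) (Sum.inl 0) - sd * p (Sum.inl 0) = 0
          rw [hsu, hp0]
          field_simp
          ring
        · show A (Sum.inr w) (Sum.inl 1) - sd * p (Sum.inl 1) = 0
          rw [hsv, hp1]
          field_simp
          ring
      · rcases eq_or_ne j w with rfl | hj
        · rw [hpw, hsd2, sub_self]
        · rw [hpi j hj, hll w j (Ne.symm hj), mul_zero, sub_zero]
    have hA's : ∀ α β, A' β α = A' α β := fun α β => by
      rw [hA'app, hA'app, hsym' α β, mul_comm]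
    have hcol : ∀ α, A' α (Sum.inr w) = 0 := fun α =>
      (hA's (Sum.inr w) α).trans (hrow α)
    -- the embedding of Fin (m+2) into the vertices avoiding leaf w
    set φ : Fin (m+2) → Fin 2 ⊕ Fin (m+1) := fun k =>
      if h : (k : ℕ) < m then Sum.inr (w.succAbove ⟨k.1, h⟩)
      else if (k : ℕ) = m then Sum.inl 0 else Sum.inl 1 with hφdef
    have hφlt : ∀ (k : Fin (m+2)) (h : (k : ℕ) < m),
        φ k = Sum.inr (w.succAbove ⟨k.1, h⟩) := fun k h => by
      rw [hφdef]; exact dif_pos h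
    have hφm : ∀ (k : Fin (m+2)), (k : ℕ) = m → φ k = Sum.inl 0 := fun k h => by
      simp only [hφdef]
      rw [dif_neg (by omega)]
      exact if_pos h
    have hφm1 : ∀ (k : Fin (m+2)), (k : ℕ) = m + 1 → φ k = Sum.inl 1 := fun k h => by
      simp only [hφdef]
      rw [dif_neg (by omega)]
      exact if_neg (by omega)
    have hφcases : ∀ k : Fin (m+2), (k : ℕ) < m ∨ (k : ℕ) = m ∨ (k : ℕ) = m + 1 :=
      fun k => by omega
    have hφne : ∀ k, φ k ≠ Sum.inr w := by
      intro k
      rcases hφcases k with h | h | h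
      · rw [hφlt k h]
        intro hc
        exact Fin.succAbove_ne w ⟨k.1, h⟩ (Sum.inr.inj hc)
      · rw [hφm k h]; simp
      · rw [hφm1 k h]; simp
    have hφinj : Function.Injective φ := by
      intro k l hkl
      rcases hφcases k with hk | hk | hk <;> rcases hφcases l with hl | hl | hl
      · rw [hφlt k hk, hφlt l hl] at hkl
        have h2 := Fin.succAbove_right_injective (p := w) (Sum.inr.inj hkl)
        have h3 : k.1 = l.1 := by simpa using h2
        exact Fin.ext h3
      · rw [hφlt k hk, hφm l hl] at hkl; exact absurd hkl (by simp)
      · rw [hφlt k hk, hφm1 l hl] at hkl; exact absurd hkl (by simp)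
      · rw [hφm k hk, hφlt l hl] at hkl; exact absurd hkl (by simp)
      · exact Fin.ext (by omega)
      · rw [hφm k hk, hφm1 l hl] at hkl
        exact absurd (Sum.inl.inj hkl) (by simp)
      · rw [hφm1 k hk, hφlt l hl] at hkl; exact absurd hkl (by simp)
      · rw [hφm1 k hk, hφm l hl] at hkl
        exact absurd (Sum.inl.inj hkl) (by simp)
      · exact Fin.ext (by omega)
    have hφsurj : ∀ α, α ≠ Sum.inr w → ∃ k : Fin (m+2), φ k = α := by
      intro α hα
      rcases α with y | i
      · fin_cases y
        · exact ⟨⟨m, by omega⟩, hφm _ rfl⟩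
        · exact ⟨⟨m+1, by omega⟩, hφm1 _ rfl⟩
      · have hi : i ≠ w := fun h => hα (by rw [h])
        obtain ⟨j, hj⟩ := Fin.exists_succAbove_eq hi
        exact ⟨⟨j.1, by omega⟩, by rw [hφlt _ j.2]; exact congrArg Sum.inr hj⟩
    set Q : Matrix (Fin (m+2)) (Fin 2 ⊕ Fin (m+1)) ℝ :=
      Matrix.of (fun k β => if φ k = β then 1 else 0) with hQdef
    have hQapp : ∀ k β, Q k β = if φ k = β then 1 else 0 := fun k β => by rw [hQdef]; rfl
    set C : Matrix (Fin (m+2)) (Fin (m+2)) ℝ := Q * A' * Qᵀ with hCdef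
    have hCapp : ∀ k l, C k l = A' (φ k) (φ l) := by
      intro k l
      rw [hCdef, Matrix.mul_apply]
      have h1 : ∀ j, (Q * A') k j = A' (φ k) j := by
        intro j
        rw [Matrix.mul_apply]
        rw [Finset.sum_eq_single (φ k)]
        · rw [hQapp, if_pos rfl, one_mul]
        · intro b _ hb
          rw [hQapp, if_neg (Ne.symm hb), zero_mul]
        · intro h; exact absurd (Finset.mem_univ _) h
      simp only [h1, Matrix.transpose_apply]
      rw [Finset.sum_eq_single (φ l)]
      · rw [hQapp, if_pos rfl, mul_one]
      · intro b _ hb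
        rw [hQapp, if_neg (fun hc => hb hc.symm), mul_zero]
      · intro h; exact absurd (Finset.mem_univ _) h
    have hCsymm : C.IsSymm := by
      ext k l
      rw [Matrix.transpose_apply, hCapp, hCapp]
      exact hA's _ _
    have hCcop : IsCopositive C := by
      intro y hy
      rw [hCdef, conj_quad]
      set z := Qᵀ *ᵥ y with hzdef
      have hzapp : ∀ α, z α = ∑ k, (if φ k = α then 1 else 0) * y k := by
        intro α
        rw [hzdef]
        simp only [Matrix.mulVec, dotProduct, Matrix.transpose_apply, hQapp]
      have hz : ∀ α, 0 ≤ z α := by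
        intro α
        rw [hzapp]
        refine Finset.sum_nonneg (fun k _ => ?_)
        split
        · rw [one_mul]; exact hy k
        · rw [zero_mul]
      have hzw : z (Sum.inr w) = 0 := by
        rw [hzapp]
        refine Finset.sum_eq_zero (fun k _ => ?_)
        rw [if_neg (hφne k), zero_mul]
      set s := -(A (Sum.inl 0) (Sum.inr w) * z (Sum.inl 0)
        + A (Sum.inl 1) (Sum.inr w) * z (Sum.inl 1)) / A (Sum.inr w) (Sum.inr w) with hsdef
      have hs : 0 ≤ s := by
        refine div_nonneg ?_ hdw.le
        nlinarith [mul_nonneg (neg_nonneg.2 haw.le) (hz (Sum.inl 0)),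
          mul_nonneg (neg_nonneg.2 hbw.le) (hz (Sum.inl 1))]
      set x := z + Pi.single (Sum.inr w) s with hxdef
      have hsing : ∀ α, 0 ≤ Pi.single (M := fun _ : Fin 2 ⊕ Fin (m+1) => ℝ) (Sum.inr w) s α := by
        intro α
        rcases eq_or_ne α (Sum.inr w) with rfl | hα
        · rw [Pi.single_eq_same]; exact hs
        · rw [Pi.single_eq_of_ne hα]
      have hx : ∀ α, 0 ≤ x α := fun α => add_nonneg (hz α) (hsing α)
      have hxw : x (Sum.inr w) = s := by
        rw [hxdef, Pi.add_apply, hzw, Pi.single_eq_same, zero_add]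
      have hxu : x (Sum.inl 0) = z (Sum.inl 0) := by
        rw [hxdef, Pi.add_apply, Pi.single_eq_of_ne (by simp), add_zero]
      have hxv : x (Sum.inl 1) = z (Sum.inl 1) := by
        rw [hxdef, Pi.add_apply, Pi.single_eq_of_ne (by simp), add_zero]
      have key1 : z ⬝ᵥ A' *ᵥ z = x ⬝ᵥ A' *ᵥ x := by
        have e1 : A' *ᵥ Pi.single (Sum.inr w) s = 0 := by
          rw [Matrix.mulVec_single]
          funext α
          simp [hcol]
        have e2 : Pi.single (Sum.inr w) s ⬝ᵥ (A' *ᵥ z) = 0 := by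
          rw [single_dotProduct]
          have : (A' *ᵥ z) (Sum.inr w) = 0 := by
            simp only [Matrix.mulVec, dotProduct]
            exact Finset.sum_eq_zero (fun β _ => by rw [hrow, zero_mul])
          rw [this, mul_zero]
        rw [hxdef, Matrix.mulVec_add, dotProduct_add, add_dotProduct, add_dotProduct,
          e1, e2, dotProduct_zero, dotProduct_zero]
        ring
      have hpx : p ⬝ᵥ x = 0 := by
        simp only [dotProduct, Fintype.sum_sum_type, Fin.sum_univ_two]
        have hsum : ∑ i, p (Sum.inr i) * x (Sum.inr i) = sd * s := by
          rw [Finset.sum_eq_single w]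
          · rw [hpw, hxw]
          · intro j _ hj
            rw [hpi j hj, zero_mul]
          · intro h; exact absurd (Finset.mem_univ _) h
        rw [hsum, hp0, hp1, hxu, hxv, hsdef]
        rw [← hsd2]
        field_simp
        ring
      have hobs : x ⬝ᵥ A' *ᵥ x = x ⬝ᵥ A *ᵥ x - (p ⬝ᵥ x)^2 := by
        rw [hA'def, Matrix.sub_mulVec, dotProduct_sub, vecMulVec_quad]
      rw [key1, hobs, hpx]
      have := hcop x hx
      nlinarith [this]
    have hCgraph : IsGraphOf C (Tgraph (m + 1 + 1)) := by
      intro k l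
      show (k ≠ l ∧ (m + 1 + 1 - 2 ≤ k.1 ∨ m + 1 + 1 - 2 ≤ l.1)) ↔ (k ≠ l ∧ C k l ≠ 0)
      rw [show m + 1 + 1 - 2 = m by omega]
      have hmainuv : A' (Sum.inl 0) (Sum.inl 1) ≠ 0 := by
        rw [hA'app, huv, hp0, hp1]
        have h1 : 0 < (A (Sum.inl 0) (Sum.inr w) / sd) * (A (Sum.inl 1) (Sum.inr w) / sd) :=
          mul_pos_of_neg_of_neg (div_neg_of_neg_of_pos haw hsd) (div_neg_of_neg_of_pos hbw hsd)
        nlinarith [h1]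
      have hmainvu : A' (Sum.inl 1) (Sum.inl 0) ≠ 0 := by
        rw [hA's]; exact hmainuv
      have hual : ∀ i, i ≠ w → A' (Sum.inl 0) (Sum.inr i) ≠ 0 := by
        intro i hi
        rw [hA'app, hpi i hi, mul_zero, sub_zero]
        exact ha i
      have hval : ∀ i, i ≠ w → A' (Sum.inl 1) (Sum.inr i) ≠ 0 := by
        intro i hi
        rw [hA'app, hpi i hi, mul_zero, sub_zero]
        exact hb i
      have hual' : ∀ i, i ≠ w → A' (Sum.inr i) (Sum.inl 0) ≠ 0 := by
        intro i hi; rw [hA's]; exact hual i hi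
      have hval' : ∀ i, i ≠ w → A' (Sum.inr i) (Sum.inl 1) ≠ 0 := by
        intro i hi; rw [hA's]; exact hval i hi
      have hsane : ∀ (kk : ℕ) (h : kk < m), w.succAbove ⟨kk, h⟩ ≠ w := fun kk h =>
        Fin.succAbove_ne w ⟨kk, h⟩
      constructor
      · rintro ⟨hkl, hm⟩
        refine ⟨hkl, ?_⟩
        rw [hCapp]
        rcases hφcases k with hk | hk | hk <;> rcases hφcases l with hl | hl | hl
        · omega
        · rw [hφlt k hk, hφm l hl]; exact hual' _ (hsane k.1 hk)
        · rw [hφlt k hk, hφm1 l hl]; exact hval' _ (hsane k.1 hk)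
        · rw [hφm k hk, hφlt l hl]; exact hual _ (hsane l.1 hl)
        · exact absurd (Fin.ext (by omega)) hkl
        · rw [hφm k hk, hφm1 l hl]; exact hmainuv
        · rw [hφm1 k hk, hφlt l hl]; exact hval _ (hsane l.1 hl)
        · rw [hφm1 k hk, hφm l hl]; exact hmainvu
        · exact absurd (Fin.ext (by omega)) hkl
      · rintro ⟨hkl, hC⟩
        refine ⟨hkl, ?_⟩
        by_contra hcon
        push_neg at hcon
        obtain ⟨hk, hl⟩ : (k : ℕ) < m ∧ (l : ℕ) < m := by omega
        rw [hCapp, hφlt k hk, hφlt l hl] at hC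
        have hij : w.succAbove ⟨k.1, hk⟩ ≠ w.succAbove ⟨l.1, hl⟩ := by
          intro h
          have h2 := Fin.succAbove_right_injective (p := w) h
          exact hkl (Fin.ext (by simpa using h2))
        rw [hA'app, hll _ _ hij, hpi _ (hsane k.1 hk), zero_mul, sub_zero] at hC
        exact hC rfl
    obtain ⟨P, N, hP, hNsym, hNnn, hCPN⟩ := hT C hCsymm hCcop hCgraph
    have hQH : Qᴴ = Qᵀ := by
      ext α k
      rw [Matrix.conjTranspose_apply, Matrix.transpose_apply]
      exact star_trivial _
    have hQMQ : ∀ (M : Matrix (Fin (m+2)) (Fin (m+2)) ℝ) (k l : Fin (m+2)),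
        (Qᵀ * M * Q) (φ k) (φ l) = M k l := by
      intro M k l
      rw [Matrix.mul_apply]
      rw [Finset.sum_eq_single l]
      · rw [hQapp, if_pos rfl, mul_one, Matrix.mul_apply]
        rw [Finset.sum_eq_single k]
        · rw [Matrix.transpose_apply, hQapp, if_pos rfl, one_mul]
        · intro b _ hb
          rw [Matrix.transpose_apply, hQapp, if_neg (fun hc => hb (hφinj hc)), zero_mul]
        · intro h; exact absurd (Finset.mem_univ _) h
      · intro j _ hj
        rw [hQapp, if_neg (fun hc => hj (hφinj hc)), mul_zero]
      · intro h; exact absurd (Finset.mem_univ _) h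
    have hQMQw1 : ∀ (M : Matrix (Fin (m+2)) (Fin (m+2)) ℝ) (β),
        (Qᵀ * M * Q) (Sum.inr w) β = 0 := by
      intro M β
      rw [Matrix.mul_apply]
      refine Finset.sum_eq_zero (fun j _ => ?_)
      rw [Matrix.mul_apply]
      have hz : ∀ k' ∈ Finset.univ, Qᵀ (Sum.inr w) k' * M k' j = 0 := fun k' _ => by
        rw [Matrix.transpose_apply, hQapp, if_neg (hφne k'), zero_mul]
      rw [Finset.sum_eq_zero hz, zero_mul]
    have hQMQw2 : ∀ (M : Matrix (Fin (m+2)) (Fin (m+2)) ℝ) (α),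
        (Qᵀ * M * Q) α (Sum.inr w) = 0 := by
      intro M α
      rw [Matrix.mul_apply]
      refine Finset.sum_eq_zero (fun j _ => ?_)
      rw [hQapp, if_neg (hφne j), mul_zero]
    have hQCQ : ∀ α β, (Qᵀ * C * Q) α β = A' α β := by
      intro α β
      rcases eq_or_ne α (Sum.inr w) with rfl | hα
      · rw [hQMQw1, hrow]
      · rcases eq_or_ne β (Sum.inr w) with rfl | hβ
        · rw [hQMQw2, hcol]
        · obtain ⟨k, rfl⟩ := hφsurj α hα
          obtain ⟨l, rfl⟩ := hφsurj β hβ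
          rw [hQMQ, hCapp]
    refine ⟨Qᵀ * P * Q + Matrix.vecMulVec p p, Qᵀ * N * Q, ?_, ?_, ?_, ?_⟩
    · refine Matrix.PosSemidef.add ?_ ?_
      · have h := hP.conjTranspose_mul_mul_same Q
        rwa [hQH] at h
      · refine Matrix.PosSemidef.of_dotProduct_mulVec_nonneg ?_ ?_
        · ext α β
          rw [Matrix.conjTranspose_apply, Matrix.vecMulVec_apply, Matrix.vecMulVec_apply]
          exact (star_trivial _).trans (mul_comm _ _)
        · intro x2
          have hst : star x2 = x2 := funext (fun _ => star_trivial _)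
          rw [hst, vecMulVec_quad]
          exact sq_nonneg _
    · show (Qᵀ * N * Q)ᵀ = Qᵀ * N * Q
      calc (Qᵀ * N * Q)ᵀ = Qᵀ * (Qᵀ * N)ᵀ := Matrix.transpose_mul _ _
        _ = Qᵀ * (Nᵀ * Qᵀᵀ) := by rw [Matrix.transpose_mul]
        _ = Qᵀ * N * Q := by
            rw [Matrix.transpose_transpose, hNsym.eq]
            exact (Matrix.mul_assoc _ _ _).symm
    · intro α β
      rw [Matrix.mul_apply]
      refine Finset.sum_nonneg (fun j _ => mul_nonneg ?_ ?_)
      · rw [Matrix.mul_apply]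
        refine Finset.sum_nonneg (fun k _ => mul_nonneg ?_ (hNnn k j))
        rw [Matrix.transpose_apply, hQapp]
        split
        · exact zero_le_one
        · exact le_rfl
      · rw [hQapp]
        split
        · exact zero_le_one
        · exact le_rfl
    · have hC2 : Qᵀ * C * Q = Qᵀ * P * Q + Qᵀ * N * Q := by
        rw [hCPN, Matrix.mul_add, Matrix.add_mul]
      ext α β
      have h1 := hQCQ α β
      have h2 : (Qᵀ * C * Q) α β = (Qᵀ * P * Q) α β + (Qᵀ * N * Q) α β := by
        rw [hC2, Matrix.add_apply]
      have h3 := hA'app α β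
      rw [Matrix.add_apply, Matrix.add_apply, Matrix.vecMulVec_apply]
      linarith [h1, h2, h3]
  · -- Case 2 : no leaf has both entries negative; explicit decomposition
    push_neg at hneg
    set N : Matrix (Fin 2 ⊕ Fin (m+1)) (Fin 2 ⊕ Fin (m+1)) ℝ := fun α β =>
      match α, β with
      | Sum.inl x, Sum.inr i => max (A (Sum.inl x) (Sum.inr i)) 0
      | Sum.inr i, Sum.inl x => max (A (Sum.inl x) (Sum.inr i)) 0
      | _, _ => 0 with hNdef
    have hNs : ∀ α β, N β α = N α β := by
      intro α β
      rw [hNdef]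
      rcases α with x | i <;> rcases β with y | j <;> rfl
    have hNnn : ∀ α β, 0 ≤ N α β := by
      intro α β
      rw [hNdef]
      rcases α with x | i <;> rcases β with y | j
      · exact le_refl 0
      · exact le_max_right _ _
      · exact le_max_right _ _
      · exact le_refl 0
    refine ⟨A - N, N, Matrix.PosSemidef.of_dotProduct_mulVec_nonneg ?_ ?_, ?_, hNnn, by rw [sub_add_cancel]⟩
    · -- IsHermitian
      ext α β
      simp only [Matrix.conjTranspose_apply, Matrix.sub_apply, star_trivial]
      rw [hsym', hNs]
    · -- the quadratic form
      intro x
      have hstar : star x = x := funext fun i => star_trivial _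
      rw [hstar, Matrix.sub_mulVec, dotProduct_sub,
        master A hsu hsv huv hvu hll x,
        master N (fun i => by rw [hNdef]) (fun i => by rw [hNdef]) (by rw [hNdef])
          (by rw [hNdef]) (fun i j _ => by rw [hNdef]) x]
      have hNuu : N (Sum.inl 0) (Sum.inl 0) = 0 := by rw [hNdef]
      have hNvv : N (Sum.inl 1) (Sum.inl 1) = 0 := by rw [hNdef]
      have hNd : ∀ i, N (Sum.inr i) (Sum.inr i) = 0 := fun i => by rw [hNdef]
      have hNa : ∀ i, N (Sum.inl 0) (Sum.inr i) = max (A (Sum.inl 0) (Sum.inr i)) 0 :=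
        fun i => by rw [hNdef]
      have hNb : ∀ i, N (Sum.inl 1) (Sum.inr i) = max (A (Sum.inl 1) (Sum.inr i)) 0 :=
        fun i => by rw [hNdef]
      simp only [hNuu, hNvv, hNd, hNa, hNb]
      set Sa : ℝ := ∑ i, (min (A (Sum.inl 0) (Sum.inr i)) 0)^2 / A (Sum.inr i) (Sum.inr i)
        with hSadef
      set Sb : ℝ := ∑ i, (min (A (Sum.inl 1) (Sum.inr i)) 0)^2 / A (Sum.inr i) (Sum.inr i)
        with hSbdef
      have hsum : -(Sa * x (Sum.inl 0)^2 + Sb * x (Sum.inl 1)^2)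
          ≤ ∑ i, ((A (Sum.inr i) (Sum.inr i) * x (Sum.inr i)^2
            + 2 * A (Sum.inl 0) (Sum.inr i) * x (Sum.inl 0) * x (Sum.inr i)
            + 2 * A (Sum.inl 1) (Sum.inr i) * x (Sum.inl 1) * x (Sum.inr i))
            - (0 * x (Sum.inr i)^2
            + 2 * max (A (Sum.inl 0) (Sum.inr i)) 0 * x (Sum.inl 0) * x (Sum.inr i)
            + 2 * max (A (Sum.inl 1) (Sum.inr i)) 0 * x (Sum.inl 1) * x (Sum.inr i))) := by
        have hle := Finset.sum_le_sum (f := fun i =>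
            -((min (A (Sum.inl 0) (Sum.inr i)) 0)^2 / A (Sum.inr i) (Sum.inr i) * x (Sum.inl 0)^2
            + (min (A (Sum.inl 1) (Sum.inr i)) 0)^2 / A (Sum.inr i) (Sum.inr i) * x (Sum.inl 1)^2))
          (g := fun i => (A (Sum.inr i) (Sum.inr i) * x (Sum.inr i)^2
            + 2 * A (Sum.inl 0) (Sum.inr i) * x (Sum.inl 0) * x (Sum.inr i)
            + 2 * A (Sum.inl 1) (Sum.inr i) * x (Sum.inl 1) * x (Sum.inr i))
            - (0 * x (Sum.inr i)^2
            + 2 * max (A (Sum.inl 0) (Sum.inr i)) 0 * x (Sum.inl 0) * x (Sum.inr i)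
            + 2 * max (A (Sum.inl 1) (Sum.inr i)) 0 * x (Sum.inl 1) * x (Sum.inr i)))
          (s := Finset.univ) ?_
        · refine le_trans (le_of_eq ?_) hle
          rw [hSadef, hSbdef, Finset.sum_mul, Finset.sum_mul, ← Finset.sum_add_distrib,
            ← Finset.sum_neg_distrib]
        · intro i _
          exact leaf_lower _ _ _ _ _ _ (hdiag (Sum.inr i)) (h0a i) (h0b i)
            (fun hc => absurd (hneg i hc.1) (not_le.2 hc.2))
      have hSa : Sa ≤ A (Sum.inl 0) (Sum.inl 0) := by
        set xa : Fin 2 ⊕ Fin (m+1) → ℝ := Sum.elim ![(1:ℝ), 0]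
          (fun i => -(min (A (Sum.inl 0) (Sum.inr i)) 0) / A (Sum.inr i) (Sum.inr i)) with hxadef
        have hxa : ∀ α, 0 ≤ xa α := by
          intro α
          rcases α with y | i
          · fin_cases y <;> simp [hxadef]
          · exact div_nonneg (neg_nonneg.2 (min_le_right _ _)) (hdiag _)
        have hc := hcop xa hxa
        rw [master A hsu hsv huv hvu hll xa] at hc
        have hx0 : xa (Sum.inl 0) = 1 := by simp [hxadef]
        have hx1 : xa (Sum.inl 1) = 0 := by simp [hxadef]
        rw [hx0, hx1] at hc
        have hval : (∑ i, (A (Sum.inr i) (Sum.inr i) * (xa (Sum.inr i))^2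
            + 2 * A (Sum.inl 0) (Sum.inr i) * 1 * xa (Sum.inr i)
            + 2 * A (Sum.inl 1) (Sum.inr i) * 0 * xa (Sum.inr i)))
            = -Sa := by
          rw [hSadef, ← Finset.sum_neg_distrib]
          refine Finset.sum_congr rfl (fun i _ => ?_)
          have hlv := leaf_value (A (Sum.inr i) (Sum.inr i)) (A (Sum.inl 0) (Sum.inr i))
            (hdiag _) (h0a i)
          have hxi : xa (Sum.inr i)
              = -(min (A (Sum.inl 0) (Sum.inr i)) 0) / A (Sum.inr i) (Sum.inr i) := by
            simp [hxadef]
          rw [hxi]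
          linear_combination hlv
        rw [hval] at hc
        nlinarith [hc]
      have hSb : Sb ≤ A (Sum.inl 1) (Sum.inl 1) := by
        set xb : Fin 2 ⊕ Fin (m+1) → ℝ := Sum.elim ![(0:ℝ), 1]
          (fun i => -(min (A (Sum.inl 1) (Sum.inr i)) 0) / A (Sum.inr i) (Sum.inr i)) with hxbdef
        have hxb : ∀ α, 0 ≤ xb α := by
          intro α
          rcases α with y | i
          · fin_cases y <;> simp [hxbdef]
          · exact div_nonneg (neg_nonneg.2 (min_le_right _ _)) (hdiag _)
        have hc := hcop xb hxb
        rw [master A hsu hsv huv hvu hll xb] at hc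
        have hx0 : xb (Sum.inl 0) = 0 := by simp [hxbdef]
        have hx1 : xb (Sum.inl 1) = 1 := by simp [hxbdef]
        rw [hx0, hx1] at hc
        have hval : (∑ i, (A (Sum.inr i) (Sum.inr i) * (xb (Sum.inr i))^2
            + 2 * A (Sum.inl 0) (Sum.inr i) * 0 * xb (Sum.inr i)
            + 2 * A (Sum.inl 1) (Sum.inr i) * 1 * xb (Sum.inr i)))
            = -Sb := by
          rw [hSbdef, ← Finset.sum_neg_distrib]
          refine Finset.sum_congr rfl (fun i _ => ?_)
          have hlv := leaf_value (A (Sum.inr i) (Sum.inr i)) (A (Sum.inl 1) (Sum.inr i))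
            (hdiag _) (h0b i)
          have hxi : xb (Sum.inr i)
              = -(min (A (Sum.inl 1) (Sum.inr i)) 0) / A (Sum.inr i) (Sum.inr i) := by
            simp [hxbdef]
          rw [hxi]
          linear_combination hlv
        rw [hval] at hc
        nlinarith [hc]
      have h1 : 0 ≤ (A (Sum.inl 0) (Sum.inl 0) - Sa) * x (Sum.inl 0)^2 :=
        mul_nonneg (by linarith) (sq_nonneg _)
      have h2 : 0 ≤ (A (Sum.inl 1) (Sum.inl 1) - Sb) * x (Sum.inl 1)^2 :=
        mul_nonneg (by linarith) (sq_nonneg _)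
      have hsplit : (∑ i, ((A (Sum.inr i) (Sum.inr i) * x (Sum.inr i)^2
            + 2 * A (Sum.inl 0) (Sum.inr i) * x (Sum.inl 0) * x (Sum.inr i)
            + 2 * A (Sum.inl 1) (Sum.inr i) * x (Sum.inl 1) * x (Sum.inr i))
            - (0 * x (Sum.inr i)^2
            + 2 * max (A (Sum.inl 0) (Sum.inr i)) 0 * x (Sum.inl 0) * x (Sum.inr i)
            + 2 * max (A (Sum.inl 1) (Sum.inr i)) 0 * x (Sum.inl 1) * x (Sum.inr i))))
          = (∑ i, (A (Sum.inr i) (Sum.inr i) * x (Sum.inr i)^2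
            + 2 * A (Sum.inl 0) (Sum.inr i) * x (Sum.inl 0) * x (Sum.inr i)
            + 2 * A (Sum.inl 1) (Sum.inr i) * x (Sum.inl 1) * x (Sum.inr i)))
          - (∑ i, (0 * x (Sum.inr i)^2
            + 2 * max (A (Sum.inl 0) (Sum.inr i)) 0 * x (Sum.inl 0) * x (Sum.inr i)
            + 2 * max (A (Sum.inl 1) (Sum.inr i)) 0 * x (Sum.inl 1) * x (Sum.inr i))) :=
        Finset.sum_sub_distrib _ _
      linarith [hsum, hsplit, h1, h2]
    · -- N symmetric
      ext α β
      exact hNs α β
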